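/- Let d ≥ 3 and n ≥ d(s+d) for nonnegative integer s and positive integers n, d. Let M = ∑_{q=1}^{d} C(n+q-1, q) and P(s) = ∑_{q=1}^{d} C(s+q-1, q). Then P(s)/M ≤ 2s/(dn), i.e., d*n*P(s) ≤ 2*s*M. -/

import Mathlib

open Finset

lemma asc_eq_prod (n : ℕ) : ∀ d : ℕ, n.ascFactorial d = ∏ i ∈ range d, (n + i)
  | 0 => by simp
  | d + 1 => by
    rw [Nat.ascFactorial_succ, prod_range_succ, asc_eq_prod n d, mul_comm]

lemma choose_mono_step (s q : ℕ) (hq : 1 ≤ q) :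
    (s + q - 1).choose q ≤ (s + (q + 1) - 1).choose (q + 1) := by
  cases s with
  | zero =>
    have h0 : q - 1 < q := by omega
    simp [Nat.choose_eq_zero_of_lt h0]
  | succ m =>
    have h1 : m + 1 + q - 1 = m + q := by omega
    have h2 : m + 1 + (q + 1) - 1 = m + q + 1 := by omega
    rw [h1, h2, Nat.choose_succ_succ' (m + q) q]
    exact Nat.le_add_right _ _

lemma choose_mono (s : ℕ) {q d : ℕ} (h1 : 1 ≤ q) (hq : q ≤ d) :
    (s + q - 1).choose q ≤ (s + d - 1).choose d := by
  induction d with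
  | zero => omega
  | succ d ih =>
    rcases Nat.lt_or_ge q (d + 1) with h' | h'
    · exact le_trans (ih (by omega)) (choose_mono_step s d (by omega))
    · have : q = d + 1 := by omega
      subst this; exact le_refl _

lemma core (n d s : ℕ) (hd : 3 ≤ d) (h : d * (s + d) ≤ n) :
    d * d * n * Nat.ascFactorial s d ≤ 2 * s * Nat.ascFactorial n d := by
  rcases Nat.eq_zero_or_pos s with rfl | hs
  · have hz : Nat.ascFactorial 0 d = 0 := by
      obtain ⟨k, rfl⟩ : ∃ k, d = k + 1 := ⟨d - 1, by omega⟩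
      exact Nat.zero_ascFactorial k
    simp [hz]
  obtain ⟨e, rfl⟩ : ∃ e, d = e + 1 := ⟨d - 1, by omega⟩
  rw [asc_eq_prod, asc_eq_prod, prod_range_succ', prod_range_succ']
  simp only [Nat.add_zero]
  have key : (∏ i ∈ range e, (s + (i + 1))) * (e + 1) ^ e ≤ ∏ i ∈ range e, (n + (i + 1)) := by
    have hpow : (e + 1) ^ e = ∏ _i ∈ range e, (e + 1) := by simp
    rw [hpow, ← prod_mul_distrib]
    apply Finset.prod_le_prod (fun i _ => Nat.zero_le _)
    intro i hi
    have hi' : i < e := mem_range.mp hi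
    have hle : (e + 1) * (s + (i + 1)) ≤ (e + 1) * (s + (e + 1)) :=
      Nat.mul_le_mul_left _ (by omega)
    calc (s + (i + 1)) * (e + 1) = (e + 1) * (s + (i + 1)) := by ring
      _ ≤ n := le_trans hle h
      _ ≤ n + (i + 1) := Nat.le_add_right _ _
  have hd2 : (e + 1) * (e + 1) ≤ (e + 1) ^ e := by
    calc (e + 1) * (e + 1) = (e + 1) ^ 2 := by ring
      _ ≤ (e + 1) ^ e := Nat.pow_le_pow_right (by omega) (by omega)
  calc (e + 1) * (e + 1) * n * ((∏ i ∈ range e, (s + (i + 1))) * s)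
      = ((e + 1) * (e + 1)) * (∏ i ∈ range e, (s + (i + 1))) * (n * s) := by ring
    _ ≤ ((e + 1) ^ e) * (∏ i ∈ range e, (s + (i + 1))) * (n * s) :=
        Nat.mul_le_mul_right _ (Nat.mul_le_mul_right _ hd2)
    _ = ((∏ i ∈ range e, (s + (i + 1))) * (e + 1) ^ e) * (n * s) := by ring
    _ ≤ (∏ i ∈ range e, (n + (i + 1))) * (n * s) := Nat.mul_le_mul_right _ key
    _ ≤ 2 * ((∏ i ∈ range e, (n + (i + 1))) * (n * s)) := Nat.le_mul_of_pos_left _ (by norm_num)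
    _ = 2 * s * ((∏ i ∈ range e, (n + (i + 1))) * n) := by ring

theorem improved_sparsity_bound (n d s : ℕ) (hn : 0 < n) (hd : 3 ≤ d)
    (h : d * (s + d) ≤ n) :
    d * n * ∑ q ∈ Finset.Icc 1 d, Nat.choose (s + q - 1) q ≤
      2 * s * ∑ q ∈ Finset.Icc 1 d, Nat.choose (n + q - 1) q := by
  have hP : ∑ q ∈ Finset.Icc 1 d, Nat.choose (s + q - 1) q ≤ d * (s + d - 1).choose d := by
    calc ∑ q ∈ Finset.Icc 1 d, Nat.choose (s + q - 1) q
        ≤ ∑ _q ∈ Finset.Icc 1 d, (s + d - 1).choose d :=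
          Finset.sum_le_sum fun q hq =>
            choose_mono s (Finset.mem_Icc.mp hq).1 (Finset.mem_Icc.mp hq).2
      _ = d * (s + d - 1).choose d := by
          simp [Finset.sum_const, Nat.card_Icc]
  have hmem : d ∈ Finset.Icc 1 d := Finset.mem_Icc.mpr ⟨by omega, le_rfl⟩
  have hM : (n + d - 1).choose d ≤ ∑ q ∈ Finset.Icc 1 d, Nat.choose (n + q - 1) q :=
    Finset.single_le_sum (f := fun q => Nat.choose (n + q - 1) q)
      (fun q _ => Nat.zero_le _) hmem
  have hcore := core n d s hd h
  rw [Nat.ascFactorial_eq_factorial_mul_choose',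
    Nat.ascFactorial_eq_factorial_mul_choose'] at hcore
  have hcancel : d * d * n * (s + d - 1).choose d ≤ 2 * s * (n + d - 1).choose d := by
    have hfac : 0 < d.factorial := Nat.factorial_pos d
    have hmul : d.factorial * (d * d * n * (s + d - 1).choose d) ≤
        d.factorial * (2 * s * (n + d - 1).choose d) := by
      calc d.factorial * (d * d * n * (s + d - 1).choose d)
          = d * d * n * (d.factorial * (s + d - 1).choose d) := by ring
        _ ≤ 2 * s * (d.factorial * (n + d - 1).choose d) := hcore
        _ = d.factorial * (2 * s * (n + d - 1).choose d) := by ring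
    exact Nat.le_of_mul_le_mul_left hmul hfac
  calc d * n * ∑ q ∈ Finset.Icc 1 d, Nat.choose (s + q - 1) q
      ≤ d * n * (d * (s + d - 1).choose d) := Nat.mul_le_mul_left _ hP
    _ = d * d * n * (s + d - 1).choose d := by ring
    _ ≤ 2 * s * (n + d - 1).choose d := hcancel
    _ ≤ 2 * s * ∑ q ∈ Finset.Icc 1 d, Nat.choose (n + q - 1) q := Nat.mul_le_mul_left _ hM
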